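/- For every 0 ≤ d ≤ n−2, the number of cubes of Ω_n of dimension d equals C(n,d)·(2^n − 2^{d+1}), and consequently the Euler characteristic of Ω_n satisfies Σ_{d=0}^{n−2} (−1)^d · C(n,d) · (2^n − 2^{d+1}) = (−1)^n · (2^n − 2), as an identity of integers. -/

import Mathlib

/-- A (potential) cube of the cubical complex `Ω_n`: an ordered 4-tuple of finite
subsets of `ℕ`. -/
structure Cube where
  A : Finset ℕ
  B : Finset ℕ
  C : Finset ℕ
  D : Finset ℕ
deriving DecidableEq

/-- `σ` is a cube of `Ω_n`: the four parts are pairwise disjoint, their union is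
`[n] = {1,…,n}`, and `A`, `C` are nonempty. -/
def IsCube (n : ℕ) (σ : Cube) : Prop :=
  Disjoint σ.A σ.B ∧ Disjoint σ.A σ.C ∧ Disjoint σ.A σ.D ∧
  Disjoint σ.B σ.C ∧ Disjoint σ.B σ.D ∧ Disjoint σ.C σ.D ∧
  σ.A ∪ σ.B ∪ σ.C ∪ σ.D = Finset.Icc 1 n ∧
  σ.A.Nonempty ∧ σ.C.Nonempty

/-- The dimension of a cube, `|B| + |D|`. -/
def Cube.dim (σ : Cube) : ℕ := σ.B.card + σ.D.card

/-- The pivot `α(σ) = min (A ∪ B)`. -/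
noncomputable def Cube.alpha (σ : Cube) : ℕ := sInf (↑(σ.A ∪ σ.B) : Set ℕ)

/-- The pivot `β(σ) = max (B ∪ C)`. -/
noncomputable def Cube.beta (σ : Cube) : ℕ := sSup (↑(σ.B ∪ σ.C) : Set ℕ)

def M1up (σ : Cube) : Prop := σ.alpha ∈ σ.B
def M1down (σ : Cube) : Prop := σ.alpha ∈ σ.A ∧ 2 ≤ σ.A.card
def M2up (σ : Cube) : Prop := σ.A = {σ.alpha} ∧ σ.beta ∈ σ.B
def M2down (σ : Cube) : Prop :=
  σ.A = {σ.alpha} ∧ σ.beta ∈ σ.C ∧ 2 ≤ σ.C.card ∧ σ.alpha < σ.beta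
def Mdown (σ : Cube) : Prop := M1down σ ∨ M2down σ
def Mup (σ : Cube) : Prop := M1up σ ∨ M2up σ
def Critical (σ : Cube) : Prop := ¬ Mdown σ ∧ ¬ Mup σ

/-- The covering relation: `τ` is obtained from `σ` by moving exactly one element
of `B(σ) ∪ D(σ)` into `A(σ)` or into `C(σ)`. -/
def Covers (σ τ : Cube) : Prop :=
  (∃ x ∈ σ.B, τ = ⟨insert x σ.A, σ.B.erase x, σ.C, σ.D⟩) ∨
  (∃ x ∈ σ.B, τ = ⟨σ.A, σ.B.erase x, insert x σ.C, σ.D⟩) ∨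
  (∃ x ∈ σ.D, τ = ⟨insert x σ.A, σ.B, σ.C, σ.D.erase x⟩) ∨
  (∃ x ∈ σ.D, τ = ⟨σ.A, σ.B, insert x σ.C, σ.D.erase x⟩)

open Classical in
/-- The matching `μ₊ : M↓ → M↑`. -/
noncomputable def muPlus (σ : Cube) : Cube :=
  if M1down σ then ⟨σ.A.erase σ.alpha, insert σ.alpha σ.B, σ.C, σ.D⟩
  else ⟨σ.A, insert σ.beta σ.B, σ.C.erase σ.beta, σ.D⟩

lemma count_aux (N : Finset ℕ) (n d : ℕ) (hNcard : N.card = n) (hd : d + 2 ≤ n) :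
    {σ : Cube | (Disjoint σ.A σ.B ∧ Disjoint σ.A σ.C ∧ Disjoint σ.A σ.D ∧
      Disjoint σ.B σ.C ∧ Disjoint σ.B σ.D ∧ Disjoint σ.C σ.D ∧
      σ.A ∪ σ.B ∪ σ.C ∪ σ.D = N ∧ σ.A.Nonempty ∧ σ.C.Nonempty) ∧
      σ.B.card + σ.D.card = d}.ncard = n.choose d * (2 ^ n - 2 ^ (d + 1)) := by
  classical
  have hset : {σ : Cube | (Disjoint σ.A σ.B ∧ Disjoint σ.A σ.C ∧ Disjoint σ.A σ.D ∧
      Disjoint σ.B σ.C ∧ Disjoint σ.B σ.D ∧ Disjoint σ.C σ.D ∧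
      σ.A ∪ σ.B ∪ σ.C ∪ σ.D = N ∧ σ.A.Nonempty ∧ σ.C.Nonempty) ∧
      σ.B.card + σ.D.card = d} = ↑((N.powersetCard d).biUnion (fun E =>
      (E.powerset ×ˢ ((N \ E).powerset \ {∅, N \ E})).image
        (fun r => (⟨r.2, r.1, (N \ E) \ r.2, E \ r.1⟩ : Cube)))) := by
    ext σ
    simp only [Set.mem_setOf_eq, Finset.mem_coe, Finset.mem_biUnion, Finset.mem_image]
    constructor
    · rintro ⟨⟨hAB, hAC, hAD, hBC, hBD, hCD, hU, hA, hC⟩, hdim⟩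
      have hsubB : σ.B ⊆ N := by rw [← hU]; intro x hx; simp [hx]
      have hsubD : σ.D ⊆ N := by rw [← hU]; intro x hx; simp [hx]
      have key1 : N \ (σ.B ∪ σ.D) = σ.A ∪ σ.C := by
        ext x
        have h1 : x ∈ σ.A → x ∉ σ.B := fun h h' => Finset.disjoint_left.mp hAB h h'
        have h2 : x ∈ σ.A → x ∉ σ.D := fun h h' => Finset.disjoint_left.mp hAD h h'
        have h3 : x ∈ σ.C → x ∉ σ.B := fun h h' => Finset.disjoint_left.mp hBC h' h
        have h4 : x ∈ σ.C → x ∉ σ.D := fun h h' => Finset.disjoint_left.mp hCD h h'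
        have hx : x ∈ N ↔ x ∈ σ.A ∪ σ.B ∪ σ.C ∪ σ.D := by rw [hU]
        simp only [Finset.mem_sdiff, Finset.mem_union] at *
        tauto
      refine ⟨σ.B ∪ σ.D, ?_, (σ.B, σ.A), ?_, ?_⟩
      · exact Finset.mem_powersetCard.mpr ⟨Finset.union_subset hsubB hsubD, by
          rw [Finset.card_union_of_disjoint hBD]; exact hdim⟩
      · refine Finset.mem_product.mpr ⟨Finset.mem_powerset.mpr Finset.subset_union_left,
          Finset.mem_sdiff.mpr ⟨Finset.mem_powerset.mpr ?_, ?_⟩⟩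
        · intro x hx
          rw [key1]; exact Finset.mem_union_left _ hx
        · simp only [Finset.mem_insert, Finset.mem_singleton]
          push_neg
          refine ⟨hA, ?_⟩
          intro heq
          obtain ⟨c, hc⟩ := hC
          have hcA : c ∈ σ.A := by rw [heq, key1]; exact Finset.mem_union_right _ hc
          exact Finset.disjoint_left.mp hAC hcA hc
      · have key2 : (N \ (σ.B ∪ σ.D)) \ σ.A = σ.C := by
          rw [key1]; exact Finset.union_sdiff_cancel_left hAC
        have key3 : (σ.B ∪ σ.D) \ σ.B = σ.D := Finset.union_sdiff_cancel_left hBD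
        show (⟨σ.A, σ.B, (N \ (σ.B ∪ σ.D)) \ σ.A, (σ.B ∪ σ.D) \ σ.B⟩ : Cube) = σ
        rw [key2, key3]
    · rintro ⟨E, hE, ⟨B, A⟩, hmem, rfl⟩
      dsimp only
      rw [Finset.mem_powersetCard] at hE
      obtain ⟨hEsub, hEcard⟩ := hE
      obtain ⟨hB', hA'⟩ := Finset.mem_product.mp hmem
      have hB : B ⊆ E := Finset.mem_powerset.mp hB'
      obtain ⟨hApow, hAnot⟩ := Finset.mem_sdiff.mp hA'
      have hAsub : A ⊆ N \ E := Finset.mem_powerset.mp hApow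
      simp only [Finset.mem_insert, Finset.mem_singleton] at hAnot
      push_neg at hAnot
      obtain ⟨hAne0, hAneN⟩ := hAnot
      have hdAB : Disjoint A B := (Finset.sdiff_disjoint).mono hAsub hB
      have hdAC : Disjoint A ((N \ E) \ A) := disjoint_sdiff_self_right
      have hdAD : Disjoint A (E \ B) := (Finset.sdiff_disjoint).mono hAsub Finset.sdiff_subset
      have hdBC : Disjoint B ((N \ E) \ A) :=
        (Finset.sdiff_disjoint.symm).mono hB Finset.sdiff_subset
      have hdBD : Disjoint B (E \ B) := disjoint_sdiff_self_right
      have hdCD : Disjoint ((N \ E) \ A) (E \ B) :=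
        (Finset.sdiff_disjoint).mono Finset.sdiff_subset Finset.sdiff_subset
      refine ⟨⟨hdAB, hdAC, hdAD, hdBC, hdBD, hdCD, ?_, ?_, ?_⟩, ?_⟩
      · show A ∪ B ∪ ((N \ E) \ A) ∪ (E \ B) = N
        ext x
        have hxA : x ∈ A → x ∈ N ∧ x ∉ E := fun h => Finset.mem_sdiff.mp (hAsub h)
        have hxB : x ∈ B → x ∈ E := fun h => hB h
        have hxE : x ∈ E → x ∈ N := fun h => hEsub h
        simp only [Finset.mem_union, Finset.mem_sdiff]
        constructor
        · rintro (((h | h) | h) | h)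
          · exact (hxA h).1
          · exact hxE (hxB h)
          · exact h.1.1
          · exact hxE h.1
        · intro hxN
          by_cases hE' : x ∈ E
          · by_cases hB'' : x ∈ B
            · exact Or.inl (Or.inl (Or.inr hB''))
            · exact Or.inr ⟨hE', hB''⟩
          · by_cases hA'' : x ∈ A
            · exact Or.inl (Or.inl (Or.inl hA''))
            · exact Or.inl (Or.inr ⟨⟨hxN, hE'⟩, hA''⟩)
      · exact hAne0
      · show ((N \ E) \ A).Nonempty
        rw [Finset.sdiff_nonempty]
        intro hsub
        exact hAneN (Finset.Subset.antisymm hAsub hsub)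
      · show B.card + (E \ B).card = d
        have h1 : B.card ≤ E.card := Finset.card_le_card hB
        rw [Finset.card_sdiff_of_subset hB]
        omega
  rw [hset, Set.ncard_coe_finset]
  have hdisj : ∀ E1 ∈ N.powersetCard d, ∀ E2 ∈ N.powersetCard d, E1 ≠ E2 →
      Disjoint ((E1.powerset ×ˢ ((N \ E1).powerset \ {∅, N \ E1})).image
        (fun r => (⟨r.2, r.1, (N \ E1) \ r.2, E1 \ r.1⟩ : Cube)))
        ((E2.powerset ×ˢ ((N \ E2).powerset \ {∅, N \ E2})).image
        (fun r => (⟨r.2, r.1, (N \ E2) \ r.2, E2 \ r.1⟩ : Cube))) := by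
    intro E1 h1 E2 h2 hne
    rw [Finset.disjoint_left]
    rintro σ hσ1 hσ2
    simp only [Finset.mem_image, Finset.mem_product, Finset.mem_powerset] at hσ1 hσ2
    obtain ⟨⟨B1, A1⟩, ⟨hB1, -⟩, heq1⟩ := hσ1
    obtain ⟨⟨B2, A2⟩, ⟨hB2, -⟩, heq2⟩ := hσ2
    have heq := heq1.trans heq2.symm
    simp only [Cube.mk.injEq] at heq
    apply hne
    have hB : B1 = B2 := heq.2.1
    have hD : E1 \ B1 = E2 \ B2 := heq.2.2.2
    calc E1 = B1 ∪ (E1 \ B1) := (Finset.union_sdiff_of_subset hB1).symm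
      _ = E2 := by rw [hD, hB]; exact Finset.union_sdiff_of_subset hB2
  rw [Finset.card_biUnion hdisj]
  have hterm : ∀ E ∈ N.powersetCard d,
      ((E.powerset ×ˢ ((N \ E).powerset \ {∅, N \ E})).image
        (fun r => (⟨r.2, r.1, (N \ E) \ r.2, E \ r.1⟩ : Cube))).card
        = 2 ^ d * (2 ^ (n - d) - 2) := by
    intro E hE
    rw [Finset.mem_powersetCard] at hE
    have hinjE : Function.Injective
        (fun r : Finset ℕ × Finset ℕ => (⟨r.2, r.1, (N \ E) \ r.2, E \ r.1⟩ : Cube)) := by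
      intro r s h
      simp only [Cube.mk.injEq] at h
      exact Prod.ext h.2.1 h.1
    rw [Finset.card_image_of_injective _ hinjE, Finset.card_product,
      Finset.card_powerset, hE.2]
    congr 1
    have hcard : (N \ E).card = n - d := by rw [Finset.card_sdiff_of_subset hE.1, hNcard, hE.2]
    have hNE : (N \ E) ≠ ∅ := by
      intro h
      rw [h] at hcard
      simp at hcard
      omega
    have hsub : ({∅, N \ E} : Finset (Finset ℕ)) ⊆ (N \ E).powerset := by
      intro x hx
      simp only [Finset.mem_insert, Finset.mem_singleton] at hx
      rcases hx with rfl | rfl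
      · simp
      · simp
    rw [Finset.card_sdiff_of_subset hsub, Finset.card_powerset, hcard]
    have h2 : ({∅, N \ E} : Finset (Finset ℕ)).card = 2 := by
      rw [Finset.card_insert_of_notMem, Finset.card_singleton]
      simp only [Finset.mem_singleton]
      exact fun h => hNE h.symm
    rw [h2]
  rw [Finset.sum_congr rfl hterm, Finset.sum_const, Finset.card_powersetCard, hNcard,
    smul_eq_mul]
  congr 1
  have h1 : 2 ^ d * 2 ^ (n - d) = 2 ^ n := by rw [← pow_add]; congr 1; omega
  have h2 : (2 : ℕ) ≤ 2 ^ (n - d) := by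
    calc (2 : ℕ) = 2 ^ 1 := rfl
    _ ≤ 2 ^ (n - d) := Nat.pow_le_pow_right (by norm_num) (by omega)
  have h4 : 2 ^ n = 2 ^ d * (2 ^ (n - d) - 2) + 2 ^ (d + 1) := by
    calc 2 ^ n = 2 ^ d * ((2 ^ (n - d) - 2) + 2) := by rw [Nat.sub_add_cancel h2, h1]
    _ = 2 ^ d * (2 ^ (n - d) - 2) + 2 ^ d * 2 := by ring
    _ = 2 ^ d * (2 ^ (n - d) - 2) + 2 ^ (d + 1) := by rw [pow_succ]
  omega

lemma count_cubes (n d : ℕ) (hd : d + 2 ≤ n) :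
    {σ : Cube | IsCube n σ ∧ σ.dim = d}.ncard = n.choose d * (2 ^ n - 2 ^ (d + 1)) := by
  have := count_aux (Finset.Icc 1 n) n d (by simp) hd
  simpa only [IsCube, Cube.dim] using this

lemma euler_id (m : ℕ) :
    ∑ d ∈ Finset.range (m + 1),
        (-1 : ℤ) ^ d * ((m + 2).choose d : ℤ) * (2 ^ (m + 2) - 2 ^ (d + 1)) =
      (-1 : ℤ) ^ (m + 2) * (2 ^ (m + 2) - 2) := by
  have key : ∑ d ∈ Finset.range (m + 3),
      (-1 : ℤ) ^ d * ((m + 2).choose d : ℤ) * (2 ^ (m + 2) - 2 ^ (d + 1)) =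
      -2 * (-1 : ℤ) ^ (m + 2) := by
    have e1 : ∀ d ∈ Finset.range (m + 3), (-1 : ℤ) ^ d * ((m + 2).choose d : ℤ) * (2 ^ (m + 2) - 2 ^ (d + 1)) =
        2 ^ (m + 2) * ((-1 : ℤ) ^ d * ((m + 2).choose d : ℤ)) -
          2 * ((-2 : ℤ) ^ d * ((m + 2).choose d : ℤ)) := by
      intro d _
      have h : ((-2 : ℤ)) ^ d = (-1) ^ d * 2 ^ d := by
        rw [neg_pow]
      rw [h]; ring
    rw [Finset.sum_congr rfl e1, Finset.sum_sub_distrib, ← Finset.mul_sum, ← Finset.mul_sum]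
    have S1 : ∑ d ∈ Finset.range (m + 3), (-1 : ℤ) ^ d * ((m + 2).choose d : ℤ) = 0 := by
      have h := Int.alternating_sum_range_choose (n := m + 2)
      simpa using h
    have S2 : ∑ d ∈ Finset.range (m + 3), (-2 : ℤ) ^ d * ((m + 2).choose d : ℤ) = (-1) ^ (m + 2) := by
      have h := add_pow (-2 : ℤ) 1 (m + 2)
      simp only [one_pow, mul_one] at h
      norm_num at h
      rw [← h]
    rw [S1, S2]; ring
  rw [Finset.sum_range_succ, Finset.sum_range_succ] at key
  simp only [Nat.choose_self, Nat.choose_succ_self_right] at key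
  push_cast at key
  linear_combination key

/-- For `0 ≤ d ≤ n−2`, the number of cubes of `Ω_n` of dimension `d` equals
`C(n,d)·(2^n − 2^{d+1})`, and consequently the Euler characteristic satisfies
`Σ_{d=0}^{n−2} (−1)^d C(n,d)(2^n − 2^{d+1}) = (−1)^n (2^n − 2)`. -/
theorem f_vector_and_euler (n : ℕ) (hn : 2 ≤ n) :
    (∀ d ≤ n - 2,
      {σ : Cube | IsCube n σ ∧ σ.dim = d}.ncard =
        n.choose d * (2 ^ n - 2 ^ (d + 1))) ∧
    (∑ d ∈ Finset.range (n - 1),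
        (-1 : ℤ) ^ d * (n.choose d : ℤ) * (2 ^ n - 2 ^ (d + 1)) =
      (-1 : ℤ) ^ n * (2 ^ n - 2)) := by
  constructor
  · intro d hd
    exact count_cubes n d (by omega)
  · obtain ⟨m, rfl⟩ : ∃ m, n = m + 2 := ⟨n - 2, by omega⟩
    exact euler_id m
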